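/- Gauss-Bonnet formula for the f-polynomial: for any finite simple graph G=(V,E), f_G(t) = 1 + Σ_{x∈V} F_{S(x)}(t), where F_A(t) = ∫₀^t f_A(s) ds is the antiderivative of the f-polynomial of A and S(x) is the unit sphere of x. -/
import Mathlib


open Finset
open scoped Classical
set_option maxHeartbeats 1000000

/-- The f-polynomial of a finite simple graph. -/
noncomputable def fPoly {V : Type*} [Fintype V] (G : SimpleGraph V) (t : ℝ) : ℝ :=
  1 + ∑ k ∈ Finset.range (Fintype.card V), ((G.cliqueFinset (k + 1)).card : ℝ) * t ^ (k + 1)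

/-- The antiderivative `F_G(t) = ∫₀ᵗ f_G(s) ds = t + Σ_k f_k t^{k+2}/(k+2)`. -/
noncomputable def FPoly {V : Type*} [Fintype V] (G : SimpleGraph V) (t : ℝ) : ℝ :=
  t + ∑ k ∈ Finset.range (Fintype.card V),
    ((G.cliqueFinset (k + 1)).card : ℝ) * t ^ (k + 2) / (k + 2)

/-- The unit sphere `S(x)`: the induced subgraph on the neighbors of `x`. -/
def unitSphere {V : Type*} (G : SimpleGraph V) (x : V) : SimpleGraph (G.neighborSet x) :=
  G.induce (G.neighborSet x)

lemma key {V : Type*} [Fintype V] (G : SimpleGraph V) (n : ℕ) :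
    ∑ x : V, ((unitSphere G x).cliqueFinset n).card
      = (n + 1) * (G.cliqueFinset (n + 1)).card := by
  have hfix : ∀ x : V, ((unitSphere G x).cliqueFinset n).card
      = ((G.cliqueFinset (n+1)).filter fun s => x ∈ s).card := by
    intro x
    refine (Finset.card_bij'
      (fun (s : Finset V) (_ : s ∈ (G.cliqueFinset (n+1)).filter fun s => x ∈ s) =>
        (s.erase x).subtype (· ∈ G.neighborSet x))
      (fun c _ => insert x (c.image Subtype.val)) ?_ ?_ ?_ ?_).symm
    · intro s hs
      rw [Finset.mem_filter, SimpleGraph.mem_cliqueFinset_iff] at hs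
      obtain ⟨⟨hcl, hcard⟩, hx⟩ := hs
      rw [SimpleGraph.mem_cliqueFinset_iff]
      have hsub : ∀ y ∈ s.erase x, y ∈ G.neighborSet x := by
        intro y hy
        exact hcl hx (Finset.mem_of_mem_erase hy)
          (fun h => (Finset.ne_of_mem_erase hy) h.symm)
      constructor
      · intro a ha b hb hab
        simp only [Finset.mem_coe, Finset.mem_subtype] at ha hb
        exact hcl (Finset.mem_of_mem_erase ha) (Finset.mem_of_mem_erase hb)
          (fun h => hab (Subtype.ext h))
      · rw [Finset.card_subtype]
        rw [Finset.filter_true_of_mem hsub, Finset.card_erase_of_mem hx, hcard]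
        omega
    · intro c hc
      rw [SimpleGraph.mem_cliqueFinset_iff] at hc
      obtain ⟨hcl, hcard⟩ := hc
      have hx : x ∉ c.image Subtype.val := by
        simp only [Finset.mem_image, not_exists]
        rintro ⟨y, hy⟩ ⟨-, h⟩
        exact G.irrefl (h ▸ hy)
      rw [Finset.mem_filter, SimpleGraph.mem_cliqueFinset_iff]
      constructor
      · constructor
        · rw [Finset.coe_insert]
          refine SimpleGraph.IsClique.insert ?_ ?_
          · intro a ha b hb hab
            simp only [Finset.coe_image, Set.mem_image, Finset.mem_coe] at ha hb
            obtain ⟨a', ha', rfl⟩ := ha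
            obtain ⟨b', hb', rfl⟩ := hb
            exact hcl ha' hb' (fun h => hab (congrArg _ h))
          · intro b hb _
            simp only [Finset.coe_image, Set.mem_image, Finset.mem_coe] at hb
            obtain ⟨⟨b', hb'⟩, _, rfl⟩ := hb
            exact hb'
        · rw [Finset.card_insert_of_notMem hx, Finset.card_image_of_injective _ Subtype.val_injective, hcard]
      · exact Finset.mem_insert_self _ _
    · -- right inverse
      intro s hs
      rw [Finset.mem_filter] at hs
      ext y
      simp only [Finset.mem_insert, Finset.mem_image, Finset.mem_subtype, Finset.mem_erase]
      constructor
      · rintro (rfl | ⟨z, ⟨hne, hz⟩, rfl⟩)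
        · exact hs.2
        · exact hz
      · intro hy
        by_cases h : y = x
        · exact Or.inl h
        · have hyn : y ∈ G.neighborSet x := by
            rw [SimpleGraph.mem_cliqueFinset_iff] at hs
            exact (hs.1).1 hs.2 hy (fun h' => h h'.symm)
          exact Or.inr ⟨⟨y, hyn⟩, ⟨⟨h, hy⟩, rfl⟩⟩
    · -- left inverse
      intro c hc
      ext ⟨y, hy⟩
      simp only [Finset.mem_subtype, Finset.mem_erase, Finset.mem_insert, Finset.mem_image]
      constructor
      · rintro ⟨hne, h | ⟨z, hz, hzy⟩⟩
        · exact absurd h hne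
        · rwa [show z = ⟨y, hy⟩ from Subtype.ext hzy] at hz
      · intro h
        refine ⟨fun h' => G.irrefl (h' ▸ hy), Or.inr ⟨⟨y, hy⟩, h, rfl⟩⟩
  calc ∑ x : V, ((unitSphere G x).cliqueFinset n).card
      = ∑ x : V, ((G.cliqueFinset (n+1)).filter fun s => x ∈ s).card := by
        exact Finset.sum_congr rfl fun x _ => hfix x
    _ = ∑ x : V, ∑ s ∈ G.cliqueFinset (n+1), if x ∈ s then 1 else 0 := by
        simp only [Finset.card_filter]
    _ = ∑ s ∈ G.cliqueFinset (n+1), ∑ x : V, if x ∈ s then 1 else 0 := Finset.sum_comm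
    _ = ∑ s ∈ G.cliqueFinset (n+1), s.card := by
        refine Finset.sum_congr rfl fun s _ => ?_
        rw [← Finset.card_filter]
        simp [Finset.filter_mem_eq_inter]
    _ = (n + 1) * (G.cliqueFinset (n+1)).card := by
        rw [Finset.sum_congr rfl fun s hs => (SimpleGraph.mem_cliqueFinset_iff.mp hs).2,
          Finset.sum_const, smul_eq_mul, mul_comm]

lemma card_cliqueFinset_one {V : Type*} [Fintype V] (G : SimpleGraph V) :
    (G.cliqueFinset 1).card = Fintype.card V := by
  have : G.cliqueFinset 1 = Finset.univ.image (fun a => ({a} : Finset V)) := by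
    ext s
    simp [SimpleGraph.mem_cliqueFinset_iff, SimpleGraph.isNClique_one, eq_comm]
  rw [this, Finset.card_image_of_injective _ Finset.singleton_injective, Finset.card_univ]

lemma FPoly_eq_extend {W : Type*} [Fintype W] (A : SimpleGraph W) (t : ℝ) {N : ℕ}
    (hN : Fintype.card W ≤ N) :
    FPoly A t = t + ∑ k ∈ Finset.range N,
      ((A.cliqueFinset (k + 1)).card : ℝ) * t ^ (k + 2) / (k + 2) := by
  unfold FPoly
  rw [add_right_inj]
  refine Finset.sum_subset (Finset.range_subset_range.mpr hN) ?_
  intro k _ hk'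
  rw [Finset.mem_range, not_lt] at hk'
  have he : (A.cliqueFinset (k+1)) = ∅ :=
    (SimpleGraph.cliqueFree_of_card_lt (by omega)).cliqueFinset
  simp [he]

/-- Gauss–Bonnet for the f-polynomial: `f_G(t) = 1 + Σ_{x∈V} F_{S(x)}(t)`. -/
theorem gauss_bonnet_fPoly {V : Type*} [Fintype V] (G : SimpleGraph V) (t : ℝ) :
    fPoly G t = 1 + ∑ x : V, FPoly (unitSphere G x) t := by
  have hext : ∀ x : V, FPoly (unitSphere G x) t
      = t + ∑ k ∈ Finset.range (Fintype.card V),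
          (((unitSphere G x).cliqueFinset (k+1)).card : ℝ) * t^(k+2)/(k+2) := by
    intro x
    convert FPoly_eq_extend (unitSphere G x) t
      (Fintype.card_le_of_injective Subtype.val Subtype.val_injective)
  have h1 : ∑ x : V, FPoly (unitSphere G x) t
      = (Fintype.card V : ℝ) * t + ∑ k ∈ Finset.range (Fintype.card V),
          ((G.cliqueFinset (k+2)).card : ℝ) * t^(k+2) := by
    rw [Finset.sum_congr rfl fun x _ => hext x, Finset.sum_add_distrib]
    congr 1
    · rw [Finset.sum_const, Finset.card_univ, nsmul_eq_mul]
    · rw [Finset.sum_comm]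
      refine Finset.sum_congr rfl fun k _ => ?_
      rw [← Finset.sum_div, ← Finset.sum_mul, ← Nat.cast_sum, key G (k+1)]
      have hk2 : ((k : ℝ) + 2) ≠ 0 := by positivity
      push_cast
      field_simp
      ring
  have h2 : ∑ k ∈ Finset.range (Fintype.card V),
        ((G.cliqueFinset (k+1)).card : ℝ) * t^(k+1)
      = (Fintype.card V : ℝ) * t + ∑ k ∈ Finset.range (Fintype.card V),
          ((G.cliqueFinset (k+2)).card : ℝ) * t^(k+2) := by
    have hN : ∑ k ∈ Finset.range (Fintype.card V),
          ((G.cliqueFinset (k+1)).card : ℝ) * t^(k+1)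
        = ∑ k ∈ Finset.range (Fintype.card V + 1),
          ((G.cliqueFinset (k+1)).card : ℝ) * t^(k+1) := by
      refine Finset.sum_subset (Finset.range_subset_range.mpr (Nat.le_succ _)) ?_
      intro k _ hk'
      rw [Finset.mem_range, not_lt] at hk'
      have he : (G.cliqueFinset (k+1)) = ∅ :=
        (SimpleGraph.cliqueFree_of_card_lt (by omega)).cliqueFinset
      simp [he]
    rw [hN, Finset.sum_range_succ', card_cliqueFinset_one]
    show ∑ k ∈ Finset.range (Fintype.card V), ((G.cliqueFinset (k+2)).card : ℝ) * t^(k+2)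
        + (Fintype.card V : ℝ) * t ^ 1 = _
    rw [pow_one]
    ring
  unfold fPoly
  rw [h1, h2]
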